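/- A family of intervals with pairwise distinct left endpoints is irredundant; likewise a family of intervals with pairwise distinct right endpoints is irredundant. -/

import Mathlib

open scoped Classical

/-- A finite family of sets is irredundant if its members can be arranged in a
sequence such that each set contains a point not in any of the preceding sets. -/
def Irredundant (F : Finset (Set ℤ)) : Prop :=
  ∃ l : List (Set ℤ), l.Nodup ∧ l.toFinset = F ∧
    ∀ i : Fin l.length, ∃ x ∈ l.get i, ∀ j : Fin l.length, j < i → x ∉ l.get j

/-- An interval is a nonempty half-open integer interval `[a,b)`. -/
def IsItv (s : Set ℤ) : Prop := ∃ a b : ℤ, a < b ∧ s = Set.Ico a b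

/-- `F|s`: the members of `F` contained in `s`. -/
noncomputable def Res (F : Finset (Set ℤ)) (s : Set ℤ) : Finset (Set ℤ) :=
  F.filter (fun f => f ⊆ s)

/-- `N_x F`: the number of members of `F` containing `x`. -/
noncomputable def Nx (F : Finset (Set ℤ)) (x : ℤ) : ℕ :=
  (F.filter (fun f => x ∈ f)).card

lemma irred_aux (F : Finset (Set ℤ))
    (h : ∀ G : Finset (Set ℤ), G ⊆ F → G.Nonempty →
      ∃ s ∈ G, ∃ x ∈ s, ∀ t ∈ G, t ≠ s → x ∉ t) : Irredundant F := by
  induction F using Finset.strongInduction with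
  | _ F ih =>
    rcases F.eq_empty_or_nonempty with rfl | hne
    · exact ⟨[], by simp, by simp, fun i => absurd i.2 (by simp)⟩
    · obtain ⟨s, hs, x, hxs, hx⟩ := h F (subset_refl F) hne
      obtain ⟨l, hnd, htf, hl⟩ := ih (F.erase s) (Finset.erase_ssubset hs)
        (fun G hG hGne => h G (hG.trans (Finset.erase_subset _ _)) hGne)
      have hslnot : s ∉ l := by
        intro hsl
        have : s ∈ F.erase s := htf ▸ List.mem_toFinset.mpr hsl
        simp at this
      refine ⟨l ++ [s], ?_, ?_, ?_⟩
      · simp [List.nodup_append, hnd, hslnot]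
        exact fun a ha has => hslnot (has ▸ ha)
      · rw [List.toFinset_append, htf]; ext t
        simp only [List.toFinset_cons, List.toFinset_nil, insert_empty_eq,
          Finset.mem_union, Finset.mem_erase, Finset.mem_singleton]
        constructor
        · rintro (⟨-, ht⟩ | rfl) <;> [exact ht; exact hs]
        · intro ht
          by_cases hts : t = s
          · exact Or.inr hts
          · exact Or.inl ⟨hts, ht⟩
      · intro i
        rcases lt_or_eq_of_le (Nat.lt_succ_iff.mp (by simpa using i.2)) with hi | hi
        · obtain ⟨y, hy1, hy2⟩ := hl ⟨i, hi⟩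
          refine ⟨y, ?_, ?_⟩
          · simpa [List.get_eq_getElem, List.getElem_append_left hi] using hy1
          · intro j hj
            have hjl : (j : ℕ) < l.length := lt_trans hj hi
            have := hy2 ⟨j, hjl⟩ hj
            simpa [List.get_eq_getElem, List.getElem_append_left hjl] using this
        · refine ⟨x, ?_, ?_⟩
          · simp [List.get_eq_getElem, hi, List.getElem_append_right (le_refl l.length)]
            exact hxs
          · intro j hj
            have hjl : (j : ℕ) < l.length := hi ▸ hj
            have : l.get ⟨j, hjl⟩ ∈ F.erase s := htf ▸ List.mem_toFinset.mpr (l.get_mem _)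
            have ht := Finset.mem_erase.mp this
            have := hx _ (Finset.mem_of_mem_erase this) ht.1
            simpa [List.get_eq_getElem, List.getElem_append_left hjl] using this

theorem irredundant_of_distinct_endpoints (F : Finset (ℤ × ℤ))
    (hF : ∀ p ∈ F, p.1 < p.2) :
    ((∀ p ∈ F, ∀ q ∈ F, p ≠ q → p.1 ≠ q.1) →
      Irredundant (F.image fun p => Set.Ico p.1 p.2)) ∧
    ((∀ p ∈ F, ∀ q ∈ F, p ≠ q → p.2 ≠ q.2) →
      Irredundant (F.image fun p => Set.Ico p.1 p.2)) := by
  constructor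
  · intro hL
    apply irred_aux
    intro G hG hGne
    set G' := F.filter (fun p => Set.Ico p.1 p.2 ∈ G) with hG'
    have hG'ne : G'.Nonempty := by
      obtain ⟨t, ht⟩ := hGne
      obtain ⟨p, hp, rfl⟩ := Finset.mem_image.mp (hG ht)
      exact ⟨p, Finset.mem_filter.mpr ⟨hp, ht⟩⟩
    obtain ⟨p, hp, hpmin⟩ := Finset.exists_min_image G' (fun p => p.1) hG'ne
    have hpF := (Finset.mem_filter.mp hp).1
    have hpG := (Finset.mem_filter.mp hp).2
    refine ⟨Set.Ico p.1 p.2, hpG, p.1,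
      Set.mem_Ico.mpr ⟨le_refl _, hF p hpF⟩, ?_⟩
    intro t htG hts
    obtain ⟨q, hq, rfl⟩ := Finset.mem_image.mp (hG htG)
    have hq' : q ∈ G' := Finset.mem_filter.mpr ⟨hq, htG⟩
    have hle := hpmin q hq'
    have hne : p.1 ≠ q.1 := by
      intro he
      by_cases hpq : p = q
      · exact hts (by rw [hpq])
      · exact hL p hpF q hq hpq he
    have hlt : p.1 < q.1 := lt_of_le_of_ne hle hne
    simp only [Set.mem_Ico, not_and, not_le]
    omega
  · intro hR
    apply irred_aux
    intro G hG hGne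
    set G' := F.filter (fun p => Set.Ico p.1 p.2 ∈ G) with hG'
    have hG'ne : G'.Nonempty := by
      obtain ⟨t, ht⟩ := hGne
      obtain ⟨p, hp, rfl⟩ := Finset.mem_image.mp (hG ht)
      exact ⟨p, Finset.mem_filter.mpr ⟨hp, ht⟩⟩
    obtain ⟨p, hp, hpmax⟩ := Finset.exists_max_image G' (fun p => p.2) hG'ne
    have hpF := (Finset.mem_filter.mp hp).1
    have hpG := (Finset.mem_filter.mp hp).2
    refine ⟨Set.Ico p.1 p.2, hpG, p.2 - 1,
      Set.mem_Ico.mpr ⟨by have := hF p hpF; omega, by omega⟩, ?_⟩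
    intro t htG hts
    obtain ⟨q, hq, rfl⟩ := Finset.mem_image.mp (hG htG)
    have hq' : q ∈ G' := Finset.mem_filter.mpr ⟨hq, htG⟩
    have hle := hpmax q hq'
    have hne : p.2 ≠ q.2 := by
      intro he
      by_cases hpq : p = q
      · exact hts (by rw [hpq])
      · exact hR p hpF q hq hpq he
    have hlt : q.2 < p.2 := lt_of_le_of_ne hle (Ne.symm hne)
    simp only [Set.mem_Ico, not_and, not_le]
    omega
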